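/- On dS₃, the boost and rotational Killing vectors are related by curls: ξ^a_{boost(i)} = -½ ε^{abc} D_b (ξ_{rot(i)})_c and ξ^a_{rot(i)} = ½ ε^{abc} D_b (ξ_{boost(i)})_c, for i = 1 (and similarly i = 2, 3). Verify this for i = 1 with ξ_{rot(1)} = ∂_φ and ξ_{boost(1)} = cos θ ∂_τ - tanh τ sin θ ∂_θ. -/

import Mathlib

noncomputable section

open Real

/-- Points of the coordinate chart `(τ, θ, φ)` on three-dimensional de Sitter space. -/
abbrev Pt := Fin 3 → ℝ

/-- Partial derivative along the `i`-th coordinate. -/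
def pd (i : Fin 3) (f : Pt → ℝ) (x : Pt) : ℝ :=
  fderiv ℝ f x (Pi.single i 1)

/-- The dS₃ metric `h⁽⁰⁾ = -dτ² + cosh²τ (dθ² + sin²θ dφ²)`. -/
def gmet (x : Pt) (a b : Fin 3) : ℝ :=
  if a = b then
    if a = 0 then -1
    else if a = 1 then (Real.cosh (x 0))^2
    else (Real.cosh (x 0))^2 * (Real.sin (x 1))^2
  else 0

/-- The inverse dS₃ metric `h⁽⁰⁾^{ab}`. -/
def ginv (x : Pt) (a b : Fin 3) : ℝ :=
  if a = b then
    if a = 0 then -1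
    else if a = 1 then ((Real.cosh (x 0))^2)⁻¹
    else ((Real.cosh (x 0))^2 * (Real.sin (x 1))^2)⁻¹
  else 0

/-- Christoffel symbols `Γ^c_{ab}` of the Levi-Civita connection of `gmet`. -/
def chr (x : Pt) (a b c : Fin 3) : ℝ :=
  (1/2) * ∑ d, ginv x c d *
    (pd a (fun y => gmet y d b) x + pd b (fun y => gmet y a d) x
      - pd d (fun y => gmet y a b) x)

/-- Covariant derivative of a covector: `(D t)_{ab} = D_a t_b`. -/
def covD1 (t : Pt → Fin 3 → ℝ) (x : Pt) (a b : Fin 3) : ℝ :=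
  pd a (fun y => t y b) x - ∑ c, chr x a b c * t x c

/-- Covariant derivative of a rank-2 tensor: `(D T)_{abc} = D_a T_{bc}`. -/
def covD2 (T : Pt → Fin 3 → Fin 3 → ℝ) (x : Pt) (a b c : Fin 3) : ℝ :=
  pd a (fun y => T y b c) x - ∑ d, chr x a b d * T x d c - ∑ d, chr x a c d * T x b d

/-- Covariant derivative of a rank-3 tensor: `(D T)_{abcd} = D_a T_{bcd}`. -/
def covD3 (T : Pt → Fin 3 → Fin 3 → Fin 3 → ℝ) (x : Pt) (a b c d : Fin 3) : ℝ :=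
  pd a (fun y => T y b c d) x - ∑ e, chr x a b e * T x e c d
    - ∑ e, chr x a c e * T x b e d - ∑ e, chr x a d e * T x b c e

/-- Hessian `D_a D_b f` of a scalar. -/
def hess (f : Pt → ℝ) (x : Pt) (a b : Fin 3) : ℝ :=
  covD1 (fun y c => pd c f y) x a b

/-- The d'Alembertian `□ f = h⁽⁰⁾^{ab} D_a D_b f` on scalars. -/
def boxS (f : Pt → ℝ) (x : Pt) : ℝ :=
  ∑ a, ∑ b, ginv x a b * hess f x a b

/-- The d'Alembertian `□ = D^c D_c` on covectors. -/
def box1 (t : Pt → Fin 3 → ℝ) (x : Pt) (b : Fin 3) : ℝ :=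
  ∑ a, ∑ c, ginv x a c * covD2 (fun y => covD1 t y) x a c b

/-- The d'Alembertian `□ = D^c D_c` on rank-2 tensors. -/
def box2 (T : Pt → Fin 3 → Fin 3 → ℝ) (x : Pt) (b c : Fin 3) : ℝ :=
  ∑ a, ∑ d, ginv x a d * covD3 (fun y => covD2 T y) x a d b c

/-- The Levi-Civita symbol on three indices. -/
def levi (a b c : Fin 3) : ℝ :=
  ((((b : ℤ) - a) * ((c : ℤ) - b) * ((c : ℤ) - a) : ℤ) : ℝ) / 2

/-- The volume form `ε_{abc}` of dS₃, normalized by `ε_{τθφ} = cosh²τ sin θ`. -/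
def eps (x : Pt) (a b c : Fin 3) : ℝ :=
  (Real.cosh (x 0))^2 * Real.sin (x 1) * levi a b c

/-- The curl `(curl T)_{ab} = ε_a{}^{cd} D_c T_{db}` of a rank-2 tensor. -/
def curl (T : Pt → Fin 3 → Fin 3 → ℝ) (x : Pt) (a b : Fin 3) : ℝ :=
  ∑ c, ∑ d, ∑ e, ∑ f, ginv x c e * ginv x d f * eps x a e f * covD2 T x c d b

/-- The fully raised volume form `ε^{abc}`. -/
def epsUp (x : Pt) (a b c : Fin 3) : ℝ :=
  ∑ d, ∑ e, ∑ f, ginv x a d * ginv x b e * ginv x c f * eps x d e f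

/-- The rotational Killing vector `ξ_{rot(1)} = ∂_φ` on dS₃. -/
def xrot1 (x : Pt) : Fin 3 → ℝ := ![0, 0, 1]

/-- The boost Killing vector `ξ_{boost(1)} = cos θ ∂_τ - tanh τ sin θ ∂_θ` on dS₃. -/
def xboost1 (x : Pt) : Fin 3 → ℝ :=
  ![Real.cos (x 1), -Real.tanh (x 0) * Real.sin (x 1), 0]

/-- Lowered `ξ_{rot(1)}`. -/
def xrot1Low (x : Pt) (b : Fin 3) : ℝ := ∑ c, gmet x b c * xrot1 x c

/-- Lowered `ξ_{boost(1)}`. -/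
def xboost1Low (x : Pt) (b : Fin 3) : ℝ := ∑ c, gmet x b c * xboost1 x c

lemma hasF_comp {g : ℝ → ℝ} {g' : ℝ} (j : Fin 3) {x : Pt}
    (h : HasDerivAt g g' (x j)) :
    HasFDerivAt (fun y : Pt => g (y j)) (g' • (ContinuousLinearMap.proj j : Pt →L[ℝ] ℝ)) x :=
  h.comp_hasFDerivAt x ((ContinuousLinearMap.proj j : Pt →L[ℝ] ℝ)).hasFDerivAt

@[simp] lemma pd_const (i : Fin 3) (c : ℝ) (x : Pt) : pd i (fun _ => c) x = 0 := by
  simp [pd]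

@[simp] lemma pd_coshsq (i : Fin 3) (x : Pt) :
    pd i (fun y => Real.cosh (y 0) ^ 2) x
      = if i = 0 then 2 * Real.cosh (x 0) * Real.sinh (x 0) else 0 := by
  have h := hasF_comp (g := fun t => Real.cosh t ^ 2) (x := x) 0
    (by simpa [mul_comm, mul_assoc, mul_left_comm] using ((Real.hasDerivAt_cosh (x 0)).fun_pow 2))
  rw [pd, h.fderiv]
  fin_cases i <;> simp [Pi.single_apply, mul_comm, mul_assoc, mul_left_comm]

@[simp] lemma pd_coshsq_sinsq (i : Fin 3) (x : Pt) :
    pd i (fun y => Real.cosh (y 0) ^ 2 * Real.sin (y 1) ^ 2) x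
      = if i = 0 then 2 * Real.cosh (x 0) * Real.sinh (x 0) * Real.sin (x 1) ^ 2
        else if i = 1 then Real.cosh (x 0) ^ 2 * (2 * Real.sin (x 1) * Real.cos (x 1)) else 0 := by
  have hA := hasF_comp (g := fun t => Real.cosh t ^ 2) (x := x) 0
    (by simpa [mul_comm, mul_assoc, mul_left_comm] using ((Real.hasDerivAt_cosh (x 0)).fun_pow 2))
  have hB := hasF_comp (g := fun t => Real.sin t ^ 2) (x := x) 1
    (by simpa [mul_comm, mul_assoc, mul_left_comm] using ((Real.hasDerivAt_sin (x 1)).fun_pow 2))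
  have h := hA.fun_mul hB
  rw [pd, h.fderiv]
  fin_cases i <;> simp [Pi.single_apply, mul_comm, mul_assoc, mul_left_comm]

@[simp] lemma pd_negcos (i : Fin 3) (x : Pt) :
    pd i (fun y => -Real.cos (y 1)) x = if i = 1 then Real.sin (x 1) else 0 := by
  have h := (hasF_comp (g := fun t => Real.cos t) (x := x) 1 (Real.hasDerivAt_cos (x 1))).fun_neg
  rw [pd, h.fderiv]
  fin_cases i <;> simp [Pi.single_apply, mul_comm, mul_assoc, mul_left_comm]

@[simp] lemma pd_negcss (i : Fin 3) (x : Pt) :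
    pd i (fun y => -(Real.cosh (y 0) * Real.sinh (y 0) * Real.sin (y 1))) x
      = if i = 0 then -((Real.sinh (x 0) ^ 2 + Real.cosh (x 0) ^ 2) * Real.sin (x 1))
        else if i = 1 then -(Real.cosh (x 0) * Real.sinh (x 0) * Real.cos (x 1)) else 0 := by
  have hA := hasF_comp (g := fun t => Real.cosh t * Real.sinh t) (x := x) 0
    ((Real.hasDerivAt_cosh (x 0)).mul (Real.hasDerivAt_sinh (x 0)))
  have hB := hasF_comp (g := fun t => Real.sin t) (x := x) 1 (Real.hasDerivAt_sin (x 1))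
  have h := (hA.fun_mul hB).fun_neg
  rw [pd, h.fderiv]
  fin_cases i <;> simp [Pi.single_apply, mul_comm, mul_assoc, mul_left_comm] <;>
    exact Or.inl (by ring)

@[simp] lemma xrot1Low_eq : xrot1Low = fun x b =>
    if b = 2 then Real.cosh (x 0) ^ 2 * Real.sin (x 1) ^ 2 else 0 := by
  funext x b
  fin_cases b <;> simp [xrot1Low, xrot1, gmet, Fin.sum_univ_three]

@[simp] lemma xboost1Low_eq : xboost1Low = fun x b =>
    if b = 0 then -Real.cos (x 1)
    else if b = 1 then -(Real.cosh (x 0) * Real.sinh (x 0) * Real.sin (x 1)) else 0 := by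
  funext x b
  have hc : Real.cosh (x 0) ≠ 0 := (Real.cosh_pos (x 0)).ne'
  fin_cases b <;>
    simp [xboost1Low, xboost1, gmet, Fin.sum_univ_three, Real.tanh_eq_sinh_div_cosh] <;>
    field_simp <;> ring

set_option maxHeartbeats 2000000 in
/-- On dS₃, `ξ^a_{boost(1)} = -½ ε^{abc} D_b (ξ_{rot(1)})_c` and
`ξ^a_{rot(1)} = ½ ε^{abc} D_b (ξ_{boost(1)})_c`. -/
theorem boost_rot_curl_duality :
    ∀ x : Pt, Real.sin (x 1) ≠ 0 → ∀ a : Fin 3,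
      (xboost1 x a
        = -(1/2) * ∑ b, ∑ c, epsUp x a b c * covD1 xrot1Low x b c) ∧
      (xrot1 x a
        = (1/2) * ∑ b, ∑ c, epsUp x a b c * covD1 xboost1Low x b c) := by
  intro x hs a
  have hc : Real.cosh (x 0) ≠ 0 := (Real.cosh_pos (x 0)).ne'
  have h1 : Real.cosh (x 0) ^ 2 = Real.sinh (x 0) ^ 2 + 1 := Real.cosh_sq (x 0)
  constructor <;> fin_cases a <;>
  · simp [xboost1, xrot1, epsUp, covD1, chr, eps, levi, ginv, gmet, Fin.sum_univ_three,
      Real.tanh_eq_sinh_div_cosh]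
    try field_simp
    try ring
    try linear_combination (8 * Real.sin (x 1) ^ 4 * Real.cosh (x 0) ^ 10) * h1
    try linear_combination h1
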